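/- Let A be a C*-algebra, X a Hilbert A-module, I₁, I₂ closed ideals of A, and B the pull-back C*-algebra B = {(b₁,b₂) ∈ A/I₁ ⊕ A/I₂ : [b₁]_{(I₁+I₂)/I₁} = [b₂]_{(I₁+I₂)/I₂}}. Let Y = {(η₁,η₂) ∈ X_{I₁} ⊕ X_{I₂} : [η₁]_{(I₁+I₂)/I₁} = [η₂]_{(I₁+I₂)/I₂}}, a Hilbert B-module with coordinatewise operations. Then the map T : X_{I₁∩I₂} → Y defined by T(η) = ([η]_{I₁/(I₁∩I₂)}, [η]_{I₂/(I₁∩I₂)}) is an isomorphism of Hilbert B-modules, where X_{I₁∩I₂} is viewed as a Hilbert B-module via the isomorphism A/(I₁∩I₂) ≅ B. -/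

import Mathlib

noncomputable section

/-- A (right) Hilbert C*-module over a C*-algebra `A`. -/
class HilbertModule (A : Type*) [CStarAlgebra A] (X : Type*)
    [NormedAddCommGroup X] [NormedSpace ℂ X] : Type _ where
  rsmul : X → A → X
  inner : X → X → A
  rsmul_add_left : ∀ (x y : X) (a : A), rsmul (x + y) a = rsmul x a + rsmul y a
  rsmul_add_right : ∀ (x : X) (a b : A), rsmul x (a + b) = rsmul x a + rsmul x b
  rsmul_rsmul : ∀ (x : X) (a b : A), rsmul (rsmul x a) b = rsmul x (a * b)
  rsmul_csmul_left : ∀ (c : ℂ) (x : X) (a : A), rsmul (c • x) a = c • rsmul x a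
  rsmul_csmul_right : ∀ (c : ℂ) (x : X) (a : A), rsmul x (c • a) = c • rsmul x a
  inner_add_left : ∀ (x y z : X), inner (x + y) z = inner x z + inner y z
  inner_add_right : ∀ (x y z : X), inner x (y + z) = inner x y + inner x z
  inner_csmul_right : ∀ (c : ℂ) (x y : X), inner x (c • y) = c • inner x y
  star_inner : ∀ (x y : X), star (inner x y) = inner y x
  inner_rsmul_right : ∀ (x y : X) (a : A), inner x (rsmul y a) = inner x y * a
  inner_self_isPositive : ∀ x : X, ∃ b : A, inner x x = star b * b
  norm_sq_inner : ∀ x : X, ‖x‖ ^ 2 = ‖inner x x‖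
  norm_inner_le : ∀ x y : X, ‖inner x y‖ ≤ ‖x‖ * ‖y‖
  norm_rsmul_le : ∀ (x : X) (a : A), ‖rsmul x a‖ ≤ ‖x‖ * ‖a‖

namespace HilbertModule

variable {A : Type*} [CStarAlgebra A] {X : Type*}
  [NormedAddCommGroup X] [NormedSpace ℂ X] [HilbertModule A X]

/-- The closed submodule `X·S` generated by products `ξ·a`, `a ∈ S`. -/
def idealSub (X : Type*) {A : Type*} [CStarAlgebra A] [NormedAddCommGroup X]
    [NormedSpace ℂ X] [HilbertModule A X] (S : Set A) : Set X :=
  closure (Submodule.span ℂ {x : X | ∃ (ξ : X) (a : A), a ∈ S ∧ x = rsmul ξ a} : Set X)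

/-- The rank-one ("theta") operator `ζ ↦ ξ⟨η,ζ⟩`. -/
def rankOne (A : Type*) {X : Type*} [CStarAlgebra A] [NormedAddCommGroup X]
    [NormedSpace ℂ X] [HilbertModule A X] (ξ η : X) : X →L[ℂ] X :=
  LinearMap.mkContinuous
    { toFun := fun ζ => rsmul ξ (inner (A := A) η ζ)
      map_add' := fun x y => by
        show rsmul ξ (inner (A := A) η (x + y)) = _
        rw [inner_add_right, rsmul_add_right]
      map_smul' := fun c x => by
        show rsmul ξ (inner (A := A) η (c • x)) = _
        simp only [RingHom.id_apply]
        rw [inner_csmul_right, rsmul_csmul_right] }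
    (‖ξ‖ * ‖η‖)
    (fun ζ => by
      calc ‖rsmul ξ (inner (A := A) η ζ)‖ ≤ ‖ξ‖ * ‖inner (A := A) η ζ‖ :=
            norm_rsmul_le _ _
        _ ≤ ‖ξ‖ * (‖η‖ * ‖ζ‖) :=
            mul_le_mul_of_nonneg_left (norm_inner_le _ _) (norm_nonneg _)
        _ = ‖ξ‖ * ‖η‖ * ‖ζ‖ := (mul_assoc _ _ _).symm)

/-- The set of "compact" operators `K(X)`: the closed linear span of rank-one operators. -/
def compacts (A X : Type*) [CStarAlgebra A] [NormedAddCommGroup X]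
    [NormedSpace ℂ X] [HilbertModule A X] : Set (X →L[ℂ] X) :=
  closure (Submodule.span ℂ {T : X →L[ℂ] X | ∃ ξ η : X, T = rankOne A ξ η} : Set (X →L[ℂ] X))

/-- `K(X·I)`, viewed inside the operators on `X`: the closed span of rank-one operators
with both legs in the subset `S`. -/
def compactsOn (A : Type*) {X : Type*} [CStarAlgebra A] [NormedAddCommGroup X]
    [NormedSpace ℂ X] [HilbertModule A X] (S : Set X) : Set (X →L[ℂ] X) :=
  closure (Submodule.span ℂ
    {T : X →L[ℂ] X | ∃ ξ ∈ S, ∃ η ∈ S, T = rankOne A ξ η} : Set (X →L[ℂ] X))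

/-- An operator is adjointable if it has an adjoint with respect to the `A`-valued
inner product. -/
def IsAdjointable (A : Type*) {X : Type*} [CStarAlgebra A] [NormedAddCommGroup X]
    [NormedSpace ℂ X] [HilbertModule A X] (S : X →L[ℂ] X) : Prop :=
  ∃ T : X →L[ℂ] X, ∀ x y : X, inner (A := A) (S x) y = inner (A := A) x (T y)

end HilbertModule

/-- A C*-correspondence over `A`: a Hilbert `A`-module with a left action of `A`
by adjointable operators. -/
class Correspondence (A : Type*) [CStarAlgebra A] (X : Type*)
    [NormedAddCommGroup X] [NormedSpace ℂ X] extends HilbertModule A X where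
  lsmul : A → X → X
  lsmul_add_left : ∀ (a b : A) (x : X), lsmul (a + b) x = lsmul a x + lsmul b x
  lsmul_add_right : ∀ (a : A) (x y : X), lsmul a (x + y) = lsmul a x + lsmul a y
  lsmul_mul : ∀ (a b : A) (x : X), lsmul (a * b) x = lsmul a (lsmul b x)
  lsmul_csmul_left : ∀ (c : ℂ) (a : A) (x : X), lsmul (c • a) x = c • lsmul a x
  lsmul_csmul_right : ∀ (c : ℂ) (a : A) (x : X), lsmul a (c • x) = c • lsmul a x
  inner_lsmul_left : ∀ (a : A) (x y : X), inner (lsmul a x) y = inner x (lsmul (star a) y)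
  lsmul_rsmul : ∀ (a : A) (x : X) (b : A), lsmul a (rsmul x b) = rsmul (lsmul a x) b
  norm_lsmul_le : ∀ (a : A) (x : X), ‖lsmul a x‖ ≤ ‖a‖ * ‖x‖

namespace Correspondence

open HilbertModule

variable {A : Type*} [CStarAlgebra A] {X : Type*}
  [NormedAddCommGroup X] [NormedSpace ℂ X] [Correspondence A X]

/-- The left action `φ_X(a)` as a continuous linear operator on `X`. -/
def lact (A : Type*) {X : Type*} [CStarAlgebra A] [NormedAddCommGroup X]
    [NormedSpace ℂ X] [Correspondence A X] (a : A) : X →L[ℂ] X :=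
  LinearMap.mkContinuous
    { toFun := lsmul a
      map_add' := lsmul_add_right a
      map_smul' := fun c x => by
        show lsmul a (c • x) = _
        simp only [RingHom.id_apply]; rw [lsmul_csmul_right] }
    ‖a‖ (norm_lsmul_le a)

/-- The ideal `X(S)`: closed span of `{⟨η, φ_X(a)ξ⟩ : a ∈ S}`. -/
def corrApply (X : Type*) {A : Type*} [CStarAlgebra A] [NormedAddCommGroup X]
    [NormedSpace ℂ X] [Correspondence A X] (S : Set A) : Set A :=
  closure (Submodule.span ℂ
    {b : A | ∃ a ∈ S, ∃ ξ η : X, b = inner (A := A) η (lsmul a ξ)} : Set A)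

/-- The ideal `X⁻¹(S) = {a : ⟨η, φ_X(a)ξ⟩ ∈ S for all ξ, η}`. -/
def corrInv (X : Type*) {A : Type*} [CStarAlgebra A] [NormedAddCommGroup X]
    [NormedSpace ℂ X] [Correspondence A X] (S : Set A) : Set A :=
  {a : A | ∀ ξ η : X, inner (A := A) η (lsmul a ξ) ∈ S}

/-- The kernel of the left action `φ_X`. -/
def kerLact (X : Type*) {A : Type*} [CStarAlgebra A] [NormedAddCommGroup X]
    [NormedSpace ℂ X] [Correspondence A X] : Set A :=
  {a : A | ∀ ξ : X, lsmul a ξ = 0}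

/-- Katsura's ideal `J_X = φ_X⁻¹(K(X)) ∩ (ker φ_X)^⊥`. -/
def JX (X : Type*) {A : Type*} [CStarAlgebra A] [NormedAddCommGroup X]
    [NormedSpace ℂ X] [Correspondence A X] : Set A :=
  {a : A | lact A (X := X) a ∈ compacts A X ∧ ∀ b ∈ kerLact X, a * b = 0}

end Correspondence

open HilbertModule Correspondence

/-- Data presenting a Hilbert `B`-module `Y` as the quotient `X_I = X/XI` of a Hilbert
`A`-module `X` by a closed two-sided ideal `I` of `A` (with `B` playing the role of `A/I`). -/
structure QuotientData (A B : Type*) [CStarAlgebra A] [CStarAlgebra B]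
    (I : TwoSidedIdeal A)
    (X Y : Type*) [NormedAddCommGroup X] [NormedSpace ℂ X] [HilbertModule A X]
    [NormedAddCommGroup Y] [NormedSpace ℂ Y] [HilbertModule B Y] : Type _ where
  π : A →⋆ₐ[ℂ] B
  π_surjective : Function.Surjective π
  π_ker : ∀ a : A, π a = 0 ↔ a ∈ I
  q : X →ₗ[ℂ] Y
  q_surjective : Function.Surjective q
  q_ker : ∀ ξ : X, q ξ = 0 ↔ ξ ∈ idealSub X (I : Set A)
  q_inner : ∀ ξ ζ : X, inner (A := B) (q ξ) (q ζ) = π (inner (A := A) ξ ζ)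
  q_rsmul : ∀ (ξ : X) (a : A), q (rsmul ξ a) = rsmul (q ξ) (π a)


/-- Quotient data compatible with the left actions (presenting `X_I` as a
C*-correspondence over `A/I`). -/
structure CorrQuotientData (A B : Type*) [CStarAlgebra A] [CStarAlgebra B]
    (I : TwoSidedIdeal A)
    (X Y : Type*) [NormedAddCommGroup X] [NormedSpace ℂ X] [Correspondence A X]
    [NormedAddCommGroup Y] [NormedSpace ℂ Y] [Correspondence B Y]
    extends QuotientData A B I X Y where
  q_lsmul : ∀ (a : A) (ξ : X), q (lsmul a ξ) = lsmul (π a) (q ξ)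

/-- Katsura's ideal `J(I) = {a : [φ_X(a)]_I ∈ K(X_I), a·X⁻¹(I) ⊂ I}`, expressed via
quotient data presenting `X_I`. -/
def JofI {A B : Type*} [CStarAlgebra A] [CStarAlgebra B] {I : TwoSidedIdeal A}
    {X Y : Type*} [NormedAddCommGroup X] [NormedSpace ℂ X] [Correspondence A X]
    [NormedAddCommGroup Y] [NormedSpace ℂ Y] [HilbertModule B Y]
    (D : QuotientData A B I X Y) : Set A :=
  {a : A | (∃ T ∈ compacts B Y, ∀ ξ : X, T (D.q ξ) = D.q (lsmul a ξ)) ∧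
    ∀ b ∈ corrInv X (I : Set A), a * b ∈ I}

/-- A Hilbert `A`-bimodule: a C*-correspondence together with a left inner product
satisfying `φ_X(⟪ξ,η⟫) = θ_{ξ,η}`. -/
class HilbertBimodule (A : Type*) [CStarAlgebra A] (X : Type*)
    [NormedAddCommGroup X] [NormedSpace ℂ X] extends Correspondence A X where
  linner : X → X → A
  lsmul_linner : ∀ ξ η ζ : X, lsmul (linner ξ η) ζ = rsmul ξ (inner η ζ)

/-- The closed subspace `φ_X(S)X`: closed span of `{φ_X(a)ξ : a ∈ S}`. -/
def lsmulSet (X : Type*) {A : Type*} [CStarAlgebra A] [NormedAddCommGroup X]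
    [NormedSpace ℂ X] [Correspondence A X] (S : Set A) : Set X :=
  closure (Submodule.span ℂ
    {x : X | ∃ a ∈ S, ∃ ξ : X, x = Correspondence.lsmul a ξ} : Set X)

private lemma inner_zero_left' {W E : Type*} [CStarAlgebra W] [NormedAddCommGroup E]
    [NormedSpace ℂ E] [HilbertModule W E] (x : E) :
    HilbertModule.inner (A := W) (0 : E) x = 0 := by
  have h := HilbertModule.inner_add_left (A := W) (0 : E) 0 x
  rw [add_zero] at h
  exact left_eq_add.mp h

open HilbertModule in
/-- the map `T : X_{I₁∩I₂} → Y`, `η ↦ ([η]_{I₁/(I₁∩I₂)}, [η]_{I₂/(I₁∩I₂)})`,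
is an isomorphism of Hilbert `B`-modules onto the pull-back module
`Y = {(η₁,η₂) : [η₁]_{(I₁+I₂)/I₁} = [η₂]_{(I₁+I₂)/I₂}}`: it is injective, its range is
exactly `Y`, and it preserves the inner products and the right actions (with respect to
the identification `A/(I₁∩I₂) ≅ B`). -/
theorem stmt5 {A B₁ B₂ B₁₂ C : Type*} [CStarAlgebra A] [CStarAlgebra B₁]
    [CStarAlgebra B₂] [CStarAlgebra B₁₂] [CStarAlgebra C]
    {X Y₁ Y₂ Y₁₂ Z : Type*}
    [NormedAddCommGroup X] [NormedSpace ℂ X] [HilbertModule A X]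
    [NormedAddCommGroup Y₁] [NormedSpace ℂ Y₁] [HilbertModule B₁ Y₁]
    [NormedAddCommGroup Y₂] [NormedSpace ℂ Y₂] [HilbertModule B₂ Y₂]
    [NormedAddCommGroup Y₁₂] [NormedSpace ℂ Y₁₂] [HilbertModule B₁₂ Y₁₂]
    [NormedAddCommGroup Z] [NormedSpace ℂ Z] [HilbertModule C Z]
    [CompleteSpace X] [CompleteSpace Y₁] [CompleteSpace Y₂] [CompleteSpace Y₁₂]
    [CompleteSpace Z]
    (I₁ I₂ I₁₂ : TwoSidedIdeal A)
    (hI₁ : IsClosed (I₁ : Set A)) (hI₂ : IsClosed (I₂ : Set A))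
    (hI₁₂ : (I₁₂ : Set A) = {a : A | ∃ b ∈ (I₁ : Set A), ∃ c ∈ (I₂ : Set A), a = b + c})
    (D₁ : QuotientData A B₁ I₁ X Y₁)          -- `Y₁ = X_{I₁}`
    (D₂ : QuotientData A B₂ I₂ X Y₂)          -- `Y₂ = X_{I₂}`
    (D₁₂ : QuotientData A B₁₂ I₁₂ X Y₁₂)      -- `Y₁₂ = X_{I₁+I₂}`
    (D : QuotientData A C (I₁ ⊓ I₂) X Z)      -- `Z = X_{I₁∩I₂}`
    -- the canonical maps between the quotients:
    (r₁ : Y₁ →ₗ[ℂ] Y₁₂) (hr₁ : ∀ ξ : X, r₁ (D₁.q ξ) = D₁₂.q ξ)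
    (r₂ : Y₂ →ₗ[ℂ] Y₁₂) (hr₂ : ∀ ξ : X, r₂ (D₂.q ξ) = D₁₂.q ξ)
    (s₁ : Z →ₗ[ℂ] Y₁) (hs₁ : ∀ ξ : X, s₁ (D.q ξ) = D₁.q ξ)
    (s₂ : Z →ₗ[ℂ] Y₂) (hs₂ : ∀ ξ : X, s₂ (D.q ξ) = D₂.q ξ)
    (σ₁ : C →⋆ₐ[ℂ] B₁) (hσ₁ : ∀ a : A, σ₁ (D.π a) = D₁.π a)
    (σ₂ : C →⋆ₐ[ℂ] B₂) (hσ₂ : ∀ a : A, σ₂ (D.π a) = D₂.π a) :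
    -- `T = (s₁, s₂)` is injective,
    (∀ z z' : Z, s₁ z = s₁ z' → s₂ z = s₂ z' → z = z') ∧
    -- its range is exactly the pull-back module `Y`,
    (∀ z : Z, r₁ (s₁ z) = r₂ (s₂ z)) ∧
    (∀ (y₁ : Y₁) (y₂ : Y₂), r₁ y₁ = r₂ y₂ → ∃ z : Z, s₁ z = y₁ ∧ s₂ z = y₂) ∧
    -- and it preserves the inner products and the right actions:
    (∀ z z' : Z, inner (A := B₁) (s₁ z) (s₁ z') = σ₁ (inner (A := C) z z') ∧
        inner (A := B₂) (s₂ z) (s₂ z') = σ₂ (inner (A := C) z z')) ∧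
    (∀ (z : Z) (c : C), s₁ (rsmul z c) = rsmul (s₁ z) (σ₁ c) ∧
        s₂ (rsmul z c) = rsmul (s₂ z) (σ₂ c)) := by
  classical
  -- joint injectivity of `σ₁, σ₂`
  have hinj0 : ∀ c : C, σ₁ c = 0 → σ₂ c = 0 → c = 0 := by
    intro c h1 h2
    obtain ⟨a, rfl⟩ := D.π_surjective c
    rw [hσ₁] at h1; rw [hσ₂] at h2
    exact (D.π_ker a).2 ((TwoSidedIdeal.mem_inf (R := A)).2 ⟨(D₁.π_ker a).1 h1, (D₂.π_ker a).1 h2⟩)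
  -- the pair `(σ₁, σ₂)` is an injective *-hom, hence isometric
  have hψinj : Function.Injective (StarAlgHom.prod σ₁ σ₂) := by
    refine (injective_iff_map_eq_zero _).2 fun c hc => ?_
    have h1 : σ₁ c = 0 := congrArg Prod.fst hc
    have h2 : σ₂ c = 0 := congrArg Prod.snd hc
    exact hinj0 c h1 h2
  have hnorm : ∀ c : C, ‖c‖ = max ‖σ₁ c‖ ‖σ₂ c‖ := by
    intro c
    have h := NonUnitalStarAlgHom.norm_map (StarAlgHom.prod σ₁ σ₂) hψinj c
    rw [Prod.norm_def] at h
    exact h.symm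
  -- the norm on `Z` is the max of the two quotient norms
  have hmaxsq : ∀ x y : ℝ, 0 ≤ x → 0 ≤ y → max (x ^ 2) (y ^ 2) = max x y ^ 2 := by
    intro x y hx hy
    rcases le_total x y with h | h
    · rw [max_eq_right h, max_eq_right (by nlinarith)]
    · rw [max_eq_left h, max_eq_left (by nlinarith)]
  have hqnorm : ∀ w : X, ‖D.q w‖ = max ‖D₁.q w‖ ‖D₂.q w‖ := by
    intro w
    have e0 : ‖D.q w‖ ^ 2 = ‖D.π (HilbertModule.inner (A := A) w w)‖ := by
      rw [HilbertModule.norm_sq_inner (A := C) (D.q w), D.q_inner]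
    have e1 : ‖D₁.q w‖ ^ 2 = ‖D₁.π (HilbertModule.inner (A := A) w w)‖ := by
      rw [HilbertModule.norm_sq_inner (A := B₁) (D₁.q w), D₁.q_inner]
    have e2 : ‖D₂.q w‖ ^ 2 = ‖D₂.π (HilbertModule.inner (A := A) w w)‖ := by
      rw [HilbertModule.norm_sq_inner (A := B₂) (D₂.q w), D₂.q_inner]
    have h := hnorm (D.π (HilbertModule.inner (A := A) w w))
    rw [hσ₁, hσ₂, ← e1, ← e2, hmaxsq _ _ (norm_nonneg _) (norm_nonneg _)] at h
    rw [← e0] at h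
    exact (sq_eq_sq₀ (norm_nonneg _) (le_max_of_le_left (norm_nonneg _))).1 h
  -- contractivity of the various maps
  have hs₁c : ∀ v : Z, ‖s₁ v‖ ≤ ‖v‖ := by
    intro v
    obtain ⟨w, rfl⟩ := D.q_surjective v
    rw [hs₁, hqnorm]
    exact le_max_left _ _
  have hs₂c : ∀ v : Z, ‖s₂ v‖ ≤ ‖v‖ := by
    intro v
    obtain ⟨w, rfl⟩ := D.q_surjective v
    rw [hs₂, hqnorm]
    exact le_max_right _ _
  have hD₂c : ∀ w : X, ‖D₂.q w‖ ≤ ‖w‖ := by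
    intro w
    have h1 : ‖D₂.q w‖ ^ 2 = ‖D₂.π (HilbertModule.inner (A := A) w w)‖ := by
      rw [HilbertModule.norm_sq_inner (A := B₂) (D₂.q w), D₂.q_inner]
    have h2 : ‖D₂.π (HilbertModule.inner (A := A) w w)‖
        ≤ ‖HilbertModule.inner (A := A) w w‖ :=
      NonUnitalStarAlgHom.norm_apply_le D₂.π _
    have h3 : ‖w‖ ^ 2 = ‖HilbertModule.inner (A := A) w w‖ :=
      HilbertModule.norm_sq_inner (A := A) w
    nlinarith [norm_nonneg (D₂.q w), norm_nonneg w]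
  -- inner-product compatibility (conjunct 4)
  have hinner : ∀ z z' : Z,
      HilbertModule.inner (A := B₁) (s₁ z) (s₁ z')
        = σ₁ (HilbertModule.inner (A := C) z z') ∧
      HilbertModule.inner (A := B₂) (s₂ z) (s₂ z')
        = σ₂ (HilbertModule.inner (A := C) z z') := by
    intro z z'
    obtain ⟨ξ, rfl⟩ := D.q_surjective z
    obtain ⟨ξ', rfl⟩ := D.q_surjective z'
    constructor
    · rw [hs₁ ξ, hs₁ ξ', D₁.q_inner, D.q_inner, hσ₁]
    · rw [hs₂ ξ, hs₂ ξ', D₂.q_inner, D.q_inner, hσ₂]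
  refine ⟨?_, ?_, ?_, hinner, ?_⟩
  · -- injectivity
    intro z z' h1 h2
    have hw1 : s₁ (z - z') = 0 := by rw [map_sub, h1, sub_self]
    have hw2 : s₂ (z - z') = 0 := by rw [map_sub, h2, sub_self]
    have hc : HilbertModule.inner (A := C) (z - z') (z - z') = 0 := by
      apply hinj0
      · rw [← (hinner (z - z') (z - z')).1, hw1, inner_zero_left']
      · rw [← (hinner (z - z') (z - z')).2, hw2, inner_zero_left']
    have hnz : ‖z - z'‖ ^ 2 = 0 := by
      rw [HilbertModule.norm_sq_inner (A := C) (z - z'), hc, norm_zero]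
    have : z - z' = 0 := by
      rw [← norm_eq_zero]
      exact (pow_eq_zero_iff (two_ne_zero)).mp hnz
    exact sub_eq_zero.mp this
  · -- range condition
    intro z
    obtain ⟨ξ, rfl⟩ := D.q_surjective z
    rw [hs₁, hs₂, hr₁, hr₂]
  · -- surjectivity onto the pull-back
    intro y₁ y₂ h
    obtain ⟨ξ₁, rfl⟩ := D₁.q_surjective y₁
    obtain ⟨ξ₂, rfl⟩ := D₂.q_surjective y₂
    have hmem12 : ξ₁ - ξ₂ ∈ idealSub X (I₁₂ : Set A) := by
      apply (D₁₂.q_ker _).1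
      rw [map_sub, ← hr₁, ← hr₂, h, sub_self]
    set S₁ : Set X := {x : X | ∃ (ξ : X) (a : A), a ∈ (I₁ : Set A) ∧ x = rsmul ξ a} with hS₁
    set S₂ : Set X := {x : X | ∃ (ξ : X) (a : A), a ∈ (I₂ : Set A) ∧ x = rsmul ξ a} with hS₂
    have hk₁ : ∀ v ∈ Submodule.span ℂ S₁, D₁.q v = 0 :=
      fun v hv => (D₁.q_ker v).2 (subset_closure hv)
    have hk₂ : ∀ v ∈ Submodule.span ℂ S₂, D₂.q v = 0 :=
      fun v hv => (D₂.q_ker v).2 (subset_closure hv)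
    have hsub : idealSub X (I₁₂ : Set A)
        ⊆ closure ((Submodule.span ℂ S₁ ⊔ Submodule.span ℂ S₂ : Submodule ℂ X) : Set X) := by
      apply closure_mono
      have hspan : Submodule.span ℂ
            {x : X | ∃ (ξ : X) (a : A), a ∈ (I₁₂ : Set A) ∧ x = rsmul ξ a}
          ≤ Submodule.span ℂ S₁ ⊔ Submodule.span ℂ S₂ := by
        rw [Submodule.span_le]
        rintro x ⟨ξ, a, ha, rfl⟩
        rw [hI₁₂] at ha
        obtain ⟨b, hb, c, hc, rfl⟩ := ha
        rw [rsmul_add_right]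
        exact Submodule.add_mem_sup (Submodule.subset_span ⟨ξ, b, hb, rfl⟩)
          (Submodule.subset_span ⟨ξ, c, hc, rfl⟩)
      exact hspan
    have happrox : ∀ n : ℕ, ∃ η₁ ∈ Submodule.span ℂ S₁, ∃ η₂ ∈ Submodule.span ℂ S₂,
        ‖ξ₁ - ξ₂ - (η₁ + η₂)‖ < 1 / (n + 1) := by
      intro n
      have hmem := hsub hmem12
      rw [Metric.mem_closure_iff] at hmem
      obtain ⟨p, hp, hdist⟩ := hmem (1 / (n + 1)) (by positivity)
      obtain ⟨η₁, hη₁, η₂, hη₂, rfl⟩ := Submodule.mem_sup.1 hp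
      rw [dist_eq_norm] at hdist
      exact ⟨η₁, hη₁, η₂, hη₂, hdist⟩
    choose f₁ hf₁ f₂ hf₂ herr using happrox
    set e : ℕ → X := fun n => ξ₁ - ξ₂ - (f₁ n + f₂ n) with he
    set zseq : ℕ → Z := fun n => D.q (ξ₁ - f₁ n) with hzseq
    have herr' : ∀ n : ℕ, ‖e n‖ ≤ 1 / (n + 1) := fun n => (herr n).le
    -- `s₁` along the sequence
    have hs₁z : ∀ n, s₁ (zseq n) = D₁.q ξ₁ := by
      intro n
      rw [hzseq]
      simp only []
      rw [hs₁, map_sub, hk₁ _ (hf₁ n), sub_zero]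
    -- `s₂` along the sequence
    have hs₂z : ∀ n, s₂ (zseq n) = D₂.q ξ₂ + D₂.q (e n) := by
      intro n
      have key : ξ₁ - f₁ n = ξ₂ + e n + f₂ n := by simp only [he]; abel
      rw [hzseq]
      simp only []
      rw [hs₂, key, map_add, map_add, hk₂ _ (hf₂ n), add_zero]
    -- the sequence is Cauchy
    have hcauchy : CauchySeq zseq := by
      apply cauchySeq_of_le_tendsto_0 (fun N : ℕ => 2 / (N + 1))
      · intro n m N hn hm
        have hqd : zseq n - zseq m = D.q ((ξ₁ - f₁ n) - (ξ₁ - f₁ m)) :=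
          (map_sub D.q _ _).symm
        have h1 : D₁.q ((ξ₁ - f₁ n) - (ξ₁ - f₁ m)) = 0 := by
          rw [map_sub, map_sub, map_sub, hk₁ _ (hf₁ n), hk₁ _ (hf₁ m)]
          abel
        have key : (ξ₁ - f₁ n) - (ξ₁ - f₁ m) = (f₂ n - f₂ m) + (e n - e m) := by
          simp only [he]; abel
        have h2 : ‖D₂.q ((ξ₁ - f₁ n) - (ξ₁ - f₁ m))‖ ≤ 1 / (n + 1) + 1 / (m + 1) := by
          rw [key, map_add, map_sub, map_sub, hk₂ _ (hf₂ n), hk₂ _ (hf₂ m), sub_self,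
            zero_add]
          calc ‖D₂.q (e n) - D₂.q (e m)‖ ≤ ‖D₂.q (e n)‖ + ‖D₂.q (e m)‖ :=
                norm_sub_le _ _
            _ ≤ ‖e n‖ + ‖e m‖ := add_le_add (hD₂c _) (hD₂c _)
            _ ≤ 1 / (n + 1) + 1 / (m + 1) := add_le_add (herr' n) (herr' m)
        rw [dist_eq_norm, hqd, hqnorm, h1, norm_zero,
          max_eq_right (norm_nonneg _)]
        have hn' : (1 : ℝ) / (n + 1) ≤ 1 / (N + 1) := by
          apply one_div_le_one_div_of_le (by positivity)
          have : (N : ℝ) ≤ n := Nat.cast_le.2 hn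
          linarith
        have hm' : (1 : ℝ) / (m + 1) ≤ 1 / (N + 1) := by
          apply one_div_le_one_div_of_le (by positivity)
          have : (N : ℝ) ≤ m := Nat.cast_le.2 hm
          linarith
        calc ‖D₂.q ((ξ₁ - f₁ n) - (ξ₁ - f₁ m))‖ ≤ 1 / (n + 1) + 1 / (m + 1) := h2
          _ ≤ 1 / (N + 1) + 1 / (N + 1) := add_le_add hn' hm'
          _ = 2 / (N + 1) := by ring
      · have h := tendsto_one_div_add_atTop_nhds_zero_nat (𝕜 := ℝ)
        have h2 := h.const_mul (2 : ℝ)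
        rw [mul_zero] at h2
        refine h2.congr fun n => ?_
        field_simp
    obtain ⟨z, hz⟩ := cauchySeq_tendsto_of_complete hcauchy
    -- continuous versions of s₁, s₂
    let s₁' : Z →L[ℂ] Y₁ := LinearMap.mkContinuous s₁ 1 (fun v => by
      rw [one_mul]; exact hs₁c v)
    let s₂' : Z →L[ℂ] Y₂ := LinearMap.mkContinuous s₂ 1 (fun v => by
      rw [one_mul]; exact hs₂c v)
    have hlim1 : Filter.Tendsto (fun n => s₁ (zseq n)) Filter.atTop (nhds (s₁ z)) :=
      (s₁'.continuous.tendsto z).comp hz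
    have hlim2 : Filter.Tendsto (fun n => s₂ (zseq n)) Filter.atTop (nhds (s₂ z)) :=
      (s₂'.continuous.tendsto z).comp hz
    have e1 : s₁ z = D₁.q ξ₁ :=
      tendsto_nhds_unique hlim1
        (Filter.Tendsto.congr (fun n => (hs₁z n).symm) tendsto_const_nhds)
    have e2 : s₂ z = D₂.q ξ₂ := by
      apply tendsto_nhds_unique hlim2
      have hzero : Filter.Tendsto (fun n => D₂.q (e n)) Filter.atTop (nhds 0) := by
        rw [tendsto_zero_iff_norm_tendsto_zero]
        apply squeeze_zero (fun n => norm_nonneg _) (fun n => (hD₂c (e n)).trans (herr' n))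
        have h := tendsto_one_div_add_atTop_nhds_zero_nat (𝕜 := ℝ)
        exact h.congr fun n => by norm_num
      have := (tendsto_const_nhds (x := D₂.q ξ₂) (f := Filter.atTop (α := ℕ))).add hzero
      rw [add_zero] at this
      exact Filter.Tendsto.congr (fun n => (hs₂z n).symm) this
    exact ⟨z, e1, e2⟩
  · -- right-action compatibility
    intro z c
    obtain ⟨ξ, rfl⟩ := D.q_surjective z
    obtain ⟨a, rfl⟩ := D.π_surjective c
    constructor
    · rw [← D.q_rsmul, hs₁, D₁.q_rsmul, hσ₁, hs₁]
    · rw [← D.q_rsmul, hs₂, D₂.q_rsmul, hσ₂, hs₂]
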